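/- arXiv:2405.02152 — 4 statements merged into one kernel-verified Lean document; each statement's English description precedes it below -/
import Mathlib

section
/- Let φ : 𝕋³ → ℝ be a continuous function with φ ≥ 0, φ(−x) = φ(x) for all x ∈ 𝕋³, and ∫_{𝕋³} φ(x) dx = 1. Let f : 𝕋³ → ℝ be integrable with f ≥ 0 a.e. and with f·log f integrable. Then ∫_{𝕋³} (φ ⋆ f)(x) · log((φ ⋆ f)(x)) dx ≤ ∫_{𝕋³} f(x) · log f(x) dx. -/
open MeasureTheory
open scoped NNReal ENNReal

/-- The three-dimensional torus `ℝ³/ℤ³`, with its Haar probability (volume) measure. -/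
abbrev Torus3 : Type := Fin 3 → AddCircle (1 : ℝ)

instance : IsProbabilityMeasure (volume : Measure (AddCircle (1:ℝ))) :=
  ⟨by simp [AddCircle.measure_univ]⟩

/-- Mollifier entropy estimate (Proposition 3.1): for an even nonnegative continuous
kernel `φ` of unit mass on `𝕋³` and a nonnegative integrable `f` with `f log f`
integrable, the entropy of the convolution `φ ⋆ f` is at most the entropy of `f`. -/
theorem entropy_convolution_le
    (φ : Torus3 → ℝ) (hφc : Continuous φ) (hφ0 : ∀ x, 0 ≤ φ x)
    (hφeven : ∀ x, φ (-x) = φ x) (hφ1 : ∫ x, φ x = 1)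
    (f : Torus3 → ℝ) (hfi : Integrable f) (hf0 : ∀ᵐ x, 0 ≤ f x)
    (hflf : Integrable (fun x => f x * Real.log (f x))) :
    ∫ x, (∫ y, φ (x - y) * f y) * Real.log (∫ y, φ (x - y) * f y) ≤
      ∫ x, f x * Real.log (f x) := by
  haveI hneg : (volume : Measure Torus3).IsNegInvariant := Measure.pi.isNegInvariant _
  set Φ : ℝ → ℝ := fun t => t * Real.log t with hΦdef
  set u : Torus3 → ℝ := fun x => ∫ y, φ (x - y) * f y with hudef
  -- a uniform bound on φ
  obtain ⟨C, hC⟩ : ∃ C, ∀ x, ‖φ x‖ ≤ C := by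
    obtain ⟨C, hC⟩ := isCompact_univ.exists_bound_of_continuousOn hφc.continuousOn
    exact ⟨C, fun x => hC x (Set.mem_univ x)⟩
  have hC0 : 0 ≤ C := le_trans (norm_nonneg _) (hC 0)
  have hφle : ∀ x, φ x ≤ C := fun x => (le_abs_self _).trans (hC x)
  -- integrability of translates of φ
  have hφint : ∀ x : Torus3, Integrable fun y => φ (x - y) := fun x =>
    ((hφc.comp (continuous_const.sub continuous_id)).integrable_of_hasCompactSupport
      (HasCompactSupport.of_compactSpace _))
  have hφmass : ∀ x : Torus3, ∫ y, φ (x - y) = 1 := fun x => by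
    rw [integral_sub_left_eq_self φ volume x]; exact hφ1
  have hφmass' : ∀ y : Torus3, ∫ x, φ (x - y) = 1 := fun y => by
    rw [integral_sub_right_eq_self φ y]; exact hφ1
  -- measurability
  have hfm := hfi.aestronglyMeasurable
  have hΦfm := hflf.aestronglyMeasurable
  have hKc : Continuous fun p : Torus3 × Torus3 => φ (p.1 - p.2) :=
    hφc.comp (continuous_fst.sub continuous_snd)
  have hKfm : AEStronglyMeasurable (fun p : Torus3 × Torus3 => φ (p.1 - p.2) * f p.2)
      ((volume : Measure Torus3).prod volume) := hKc.aestronglyMeasurable.mul hfm.comp_snd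
  have hKΦm : AEStronglyMeasurable (fun p : Torus3 × Torus3 => φ (p.1 - p.2) * Φ (f p.2))
      ((volume : Measure Torus3).prod volume) := hKc.aestronglyMeasurable.mul hΦfm.comp_snd
  have hφxc : ∀ x : Torus3, Continuous fun y => φ (x - y) := fun x =>
    hφc.comp (continuous_const.sub continuous_id)
  -- pointwise integrability in y
  have hint1 : ∀ x : Torus3, Integrable fun y => φ (x - y) * f y := by
    intro x
    refine (hfi.norm.const_mul C).mono' ((hφxc x).aestronglyMeasurable.mul hfm)
      (Filter.Eventually.of_forall fun y => ?_)
    rw [norm_mul]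
    exact mul_le_mul_of_nonneg_right (hC _) (norm_nonneg _)
  have hint2 : ∀ x : Torus3, Integrable fun y => φ (x - y) * Φ (f y) := by
    intro x
    refine (hflf.norm.const_mul C).mono' ((hφxc x).aestronglyMeasurable.mul hΦfm)
      (Filter.Eventually.of_forall fun y => ?_)
    rw [norm_mul]
    exact mul_le_mul_of_nonneg_right (hC _) (norm_nonneg _)
  -- bounds on u
  set M : ℝ := C * ∫ y, ‖f y‖ with hMdef
  have hu0 : ∀ x, 0 ≤ u x := fun x =>
    integral_nonneg_of_ae (hf0.mono fun y hy => mul_nonneg (hφ0 _) hy)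
  have huM : ∀ x, u x ≤ M := by
    intro x
    calc u x ≤ ‖u x‖ := le_abs_self _
      _ ≤ ∫ y, ‖φ (x - y) * f y‖ := norm_integral_le_integral_norm _
      _ ≤ ∫ y, C * ‖f y‖ := by
          refine integral_mono (hint1 x).norm (hfi.norm.const_mul C) fun y => ?_
          rw [norm_mul]
          exact mul_le_mul_of_nonneg_right (hC _) (norm_nonneg _)
      _ = M := integral_const_mul C _
  -- measurability of u and of the majorant
  have hum : AEStronglyMeasurable u volume := hKfm.integral_prod_right'
  -- Jensen's inequality pointwise
  have jensen : ∀ x : Torus3, Φ (u x) ≤ ∫ y, φ (x - y) * Φ (f y) := by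
    intro x
    set ρ : Torus3 → ℝ≥0 := fun y => Real.toNNReal (φ (x - y)) with hρdef
    have hρm : Measurable ρ := (continuous_real_toNNReal.comp (hφxc x)).measurable
    set ν : Measure Torus3 := volume.withDensity (fun y => (ρ y : ℝ≥0∞)) with hνdef
    have key : ∀ g : Torus3 → ℝ, ∫ y, g y ∂ν = ∫ y, φ (x - y) * g y := by
      intro g
      rw [hνdef, integral_withDensity_eq_integral_smul hρm]
      refine integral_congr_ae (Filter.Eventually.of_forall fun y => ?_)
      simp [hρdef, NNReal.smul_def, Real.coe_toNNReal _ (hφ0 (x - y))]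
    haveI hν1 : IsProbabilityMeasure ν := by
      constructor
      rw [hνdef, withDensity_apply _ MeasurableSet.univ, setLIntegral_univ]
      have : ∀ y, ((ρ y : ℝ≥0∞)) = ENNReal.ofReal (φ (x - y)) := fun y => rfl
      simp_rw [this]
      rw [← ofReal_integral_eq_lintegral_ofReal (hφint x)
        (Filter.Eventually.of_forall fun y => hφ0 _), hφmass x]
      simp
    have hIg : ∀ g : Torus3 → ℝ, Integrable g volume → Integrable g ν := by
      intro g hg
      rw [hνdef, integrable_withDensity_iff_integrable_smul hρm]
      have hsm : AEStronglyMeasurable (fun y => (ρ y : ℝ) * g y) volume :=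
        (NNReal.continuous_coe.comp
          (continuous_real_toNNReal.comp (hφxc x))).aestronglyMeasurable.mul
          hg.aestronglyMeasurable
      refine (hg.norm.const_mul C).mono'
        (hsm.congr (Filter.Eventually.of_forall fun y => (NNReal.smul_def (ρ y) (g y)).symm))
        (Filter.Eventually.of_forall fun y => ?_)
      rw [NNReal.smul_def, smul_eq_mul, norm_mul]
      refine mul_le_mul_of_nonneg_right ?_ (norm_nonneg _)
      rw [Real.norm_eq_abs, abs_of_nonneg (ρ y).coe_nonneg]
      calc ((ρ y : ℝ)) = φ (x - y) := Real.coe_toNNReal _ (hφ0 _)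
        _ ≤ C := hφle _
    have haef : ∀ᵐ y ∂ν, f y ∈ Set.Ici (0 : ℝ) :=
      Filter.Eventually.filter_mono (Measure.absolutelyContinuous_of_le
          (le_refl ν)).ae_le (by exact (withDensity_absolutelyContinuous volume _).ae_le hf0)
    have hjen := Real.convexOn_mul_log.map_integral_le (μ := ν)
      Real.continuous_mul_log.continuousOn isClosed_Ici haef (hIg f hfi)
      (by exact hIg _ hflf)
    rw [key f] at hjen
    calc Φ (u x) ≤ ∫ y, Φ (f y) ∂ν := hjen
      _ = ∫ y, φ (x - y) * Φ (f y) := key _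
  -- integrability of the majorant in x
  have Hprod : Integrable (fun p : Torus3 × Torus3 => φ (p.1 - p.2) * Φ (f p.2))
      ((volume : Measure Torus3).prod volume) := by
    refine (integrable_prod_iff hKΦm).2 ⟨Filter.Eventually.of_forall hint2, ?_⟩
    refine (integrable_const (C * ∫ y, ‖Φ (f y)‖)).mono' hKΦm.norm.integral_prod_right'
      (Filter.Eventually.of_forall fun x => ?_)
    have h1 : ∫ y, ‖φ (x - y) * Φ (f y)‖ ≤ C * ∫ y, ‖Φ (f y)‖ := by
      rw [← integral_const_mul]
      refine integral_mono (hint2 x).norm (hflf.norm.const_mul C) fun y => ?_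
      rw [norm_mul]
      exact mul_le_mul_of_nonneg_right (hC _) (norm_nonneg _)
    have h0 : 0 ≤ ∫ y, ‖φ (x - y) * Φ (f y)‖ := integral_nonneg fun y => norm_nonneg _
    rw [Real.norm_eq_abs, abs_of_nonneg h0]
    exact h1
  have hg_int : Integrable (fun x => ∫ y, φ (x - y) * Φ (f y)) volume :=
    Hprod.integral_prod_left
  -- integrability of Φ ∘ u
  have hΦu_int : Integrable (fun x => Φ (u x)) volume := by
    obtain ⟨B, hB⟩ := (isCompact_Icc (a := (0:ℝ)) (b := M)).exists_bound_of_continuousOn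
      Real.continuous_mul_log.continuousOn
    refine (integrable_const B).mono' (Real.continuous_mul_log.comp_aestronglyMeasurable hum)
      (Filter.Eventually.of_forall fun x => ?_)
    exact hB (u x) ⟨hu0 x, huM x⟩
  -- put everything together
  have step1 : ∫ x, Φ (u x) ≤ ∫ x, ∫ y, φ (x - y) * Φ (f y) :=
    integral_mono hΦu_int hg_int jensen
  have step2 : ∫ x, ∫ y, φ (x - y) * Φ (f y) = ∫ y, Φ (f y) := by
    rw [integral_integral_swap Hprod]
    have : ∀ y : Torus3, ∫ x, φ (x - y) * Φ (f y) = Φ (f y) := by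
      intro y
      rw [integral_mul_const, hφmass' y, one_mul]
    simp_rw [this]
  exact step1.trans (le_of_eq step2)
end

section
/- Let T > 0 and let μ be the product of Lebesgue measure on the interval (0,T) with the Haar probability measure on 𝕋³, a finite measure on (0,T)×𝕋³. Let f and f_n (n ∈ ℕ) be measurable real-valued functions on (0,T)×𝕋³ that are nonnegative μ-a.e., and assume: (i) ∫ (√(f_n) − √f)² dμ → 0 as n → ∞; (ii) there exists B such that ∫ f_n^{3/2} dμ ≤ B for all n; (iii) ∫ f^{3/2} dμ < ∞. Then there exists a strictly increasing sequence of indices (n_k) such that ∫ |f_{n_k}·log f_{n_k} − f·log f| dμ → 0 as k → ∞ (in particular, the entropies t ↦ ∫_{𝕋³} f_{n_k}(t,x) log f_{n_k}(t,x) dx converge in L¹(0,T) to t ↦ ∫_{𝕋³} f(t,x) log f(t,x) dx). -/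
open MeasureTheory Filter

lemma mul_log_le_aux {a : ℝ} (ha : 0 < a) :
    ∃ C : ℝ, 0 ≤ C ∧ ∀ t : ℝ, 0 ≤ t → |t * Real.log t| ≤ C + a * t ^ ((3:ℝ)/2) := by
  set K : ℝ := max 1 ((4/a) ^ ((4:ℝ))) with hK
  have hK1 : (1:ℝ) ≤ K := le_max_left _ _
  have hK0 : (0:ℝ) < K := lt_of_lt_of_le one_pos hK1
  refine ⟨1 + 4 * K ^ ((5:ℝ)/4), by positivity, fun t ht => ?_⟩
  have hrpow_nonneg : 0 ≤ a * t ^ ((3:ℝ)/2) := by positivity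
  rcases le_or_gt t 1 with h1 | h1
  · rcases eq_or_lt_of_le ht with rfl | ht0
    · simp; positivity
    · have := Real.abs_log_mul_self_lt t ht0 h1
      rw [mul_comm] at this
      nlinarith [Real.rpow_nonneg hK0.le ((5:ℝ)/4)]
  · -- t > 1
    have ht0 : (0:ℝ) < t := lt_trans one_pos h1
    have hlog : Real.log t ≤ 4 * t ^ ((1:ℝ)/4) := by
      have h4 : Real.log t = 4 * Real.log (t ^ ((1:ℝ)/4)) := by
        rw [Real.log_rpow ht0]; ring
      have := Real.log_le_sub_one_of_pos (Real.rpow_pos_of_pos ht0 ((1:ℝ)/4))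
      nlinarith [Real.rpow_nonneg ht ((1:ℝ)/4)]
    have hlog0 : 0 ≤ Real.log t := Real.log_nonneg h1.le
    have habs : |t * Real.log t| = t * Real.log t := abs_of_nonneg (by positivity)
    have h54 : t * (4 * t ^ ((1:ℝ)/4)) = 4 * t ^ ((5:ℝ)/4) := by
      rw [show ((5:ℝ)/4) = 1 + (1:ℝ)/4 by norm_num, Real.rpow_add ht0, Real.rpow_one]; ring
    have hmain : t * Real.log t ≤ 4 * t ^ ((5:ℝ)/4) := by
      calc t * Real.log t ≤ t * (4 * t ^ ((1:ℝ)/4)) := by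
            exact mul_le_mul_of_nonneg_left hlog ht
        _ = 4 * t ^ ((5:ℝ)/4) := h54
    rw [habs]
    rcases le_or_gt t K with hle | hgt
    · have : t ^ ((5:ℝ)/4) ≤ K ^ ((5:ℝ)/4) := Real.rpow_le_rpow ht hle (by norm_num)
      nlinarith
    · -- t > K ≥ (4/a)^4, so 4 * t^{5/4} ≤ a * t^{3/2}
      have h4a : 4/a ≤ t ^ ((1:ℝ)/4) := by
        have h1' : ((4/a) ^ ((4:ℝ))) ≤ t := le_trans (le_max_right _ _) hgt.le
        have h2' : ((4/a) ^ ((4:ℝ))) ^ ((1:ℝ)/4) ≤ t ^ ((1:ℝ)/4) :=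
          Real.rpow_le_rpow (by positivity) h1' (by norm_num)
        rwa [← Real.rpow_mul (by positivity), show (4:ℝ) * (1/4) = 1 by norm_num,
          Real.rpow_one] at h2'
      have hsplit : t ^ ((3:ℝ)/2) = t ^ ((1:ℝ)/4) * t ^ ((5:ℝ)/4) := by
        rw [← Real.rpow_add ht0]; norm_num
      have : 4 * t ^ ((5:ℝ)/4) ≤ a * t ^ ((3:ℝ)/2) := by
        rw [hsplit]
        have := mul_le_mul_of_nonneg_right (mul_le_mul_of_nonneg_left h4a ha.le)
          (Real.rpow_nonneg ht ((5:ℝ)/4))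
        rw [mul_div_cancel₀ _ (ne_of_gt ha)] at this
        linarith [this]
      linarith [Real.rpow_nonneg hK0.le ((5:ℝ)/4)]

lemma self_le_one_add_rpow {t : ℝ} (ht : 0 ≤ t) : t ≤ 1 + t ^ ((3:ℝ)/2) := by
  rcases le_or_gt t 1 with h | h
  · have := Real.rpow_nonneg ht ((3:ℝ)/2); linarith
  · have : t ^ ((1:ℝ)) ≤ t ^ ((3:ℝ)/2) :=
      Real.rpow_le_rpow_of_exponent_le h.le (by norm_num)
    rw [Real.rpow_one] at this; linarith

lemma integrable_of_rpow32 {X : Type*} [MeasurableSpace X] {μ : Measure X} [IsFiniteMeasure μ]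
    {h : X → ℝ} (hm : Measurable h) (h0 : ∀ᵐ z ∂μ, 0 ≤ h z)
    (h32 : Integrable (fun z => h z ^ ((3:ℝ)/2)) μ) : Integrable h μ := by
  refine Integrable.mono' ((integrable_const (1:ℝ)).add h32) hm.aestronglyMeasurable ?_
  filter_upwards [h0] with z hz
  rw [Real.norm_eq_abs, abs_of_nonneg hz]
  exact self_le_one_add_rpow hz

lemma integrable_mul_log {X : Type*} [MeasurableSpace X] {μ : Measure X} [IsFiniteMeasure μ]
    {h : X → ℝ} (hm : Measurable h) (h0 : ∀ᵐ z ∂μ, 0 ≤ h z)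
    (h32 : Integrable (fun z => h z ^ ((3:ℝ)/2)) μ) :
    Integrable (fun z => h z * Real.log (h z)) μ := by
  obtain ⟨C, hC0, hC⟩ := mul_log_le_aux one_pos
  refine Integrable.mono' ((integrable_const C).add (h32.const_mul 1))
    (hm.mul (Real.measurable_log.comp hm)).aestronglyMeasurable ?_
  filter_upwards [h0] with z hz
  rw [Real.norm_eq_abs]
  exact hC _ hz


/-- Convergence of entropies (Proposition 5.1): on `(0,T) × 𝕋³`, if `√fₙ → √f` in
`L²`, the `fₙ` are uniformly bounded in `L^{3/2}`, and `f ∈ L^{3/2}`, then along a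
subsequence the entropies `∫ fₙ log fₙ` converge to `∫ f log f` in `L¹(0,T)`. -/
theorem entropy_convergence
    (T : ℝ) (hT : 0 < T)
    (μ : Measure (ℝ × Torus3))
    (hμ : μ = (volume.restrict (Set.Ioo (0 : ℝ) T)).prod (volume : Measure Torus3))
    (f : ℝ × Torus3 → ℝ) (fn : ℕ → ℝ × Torus3 → ℝ)
    (hfm : Measurable f) (hfnm : ∀ n, Measurable (fn n))
    (hf0 : ∀ᵐ z ∂μ, 0 ≤ f z) (hfn0 : ∀ n, ∀ᵐ z ∂μ, 0 ≤ fn n z)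
    (hL2 : Tendsto (fun n => ∫ z, (Real.sqrt (fn n z) - Real.sqrt (f z)) ^ 2 ∂μ)
      atTop (nhds 0))
    (hfn32 : ∀ n, Integrable (fun z => fn n z ^ ((3 : ℝ) / 2)) μ)
    (hB : ∃ B : ℝ, ∀ n, ∫ z, fn n z ^ ((3 : ℝ) / 2) ∂μ ≤ B)
    (hf32 : Integrable (fun z => f z ^ ((3 : ℝ) / 2)) μ) :
    ∃ φ : ℕ → ℕ, StrictMono φ ∧
      Tendsto (fun k =>
          ∫ z, |fn (φ k) z * Real.log (fn (φ k) z) - f z * Real.log (f z)| ∂μ)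
        atTop (nhds 0) := by
  haveI hfin : IsFiniteMeasure μ := by
    rw [hμ]
    haveI : Fact ((volume : Measure ℝ) (Set.Ioo (0:ℝ) T) < ⊤) := ⟨measure_Ioo_lt_top⟩
    infer_instance
  obtain ⟨B, hBle⟩ := hB
  have hB0 : 0 ≤ B := by
    refine le_trans ?_ (hBle 0)
    refine integral_nonneg_of_ae ?_
    filter_upwards [hfn0 0] with z hz using Real.rpow_nonneg hz _
  -- integrability of f and fn
  have hf1 : Integrable f μ := integrable_of_rpow32 hfm hf0 hf32
  have hfn1 : ∀ n, Integrable (fn n) μ := fun n =>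
    integrable_of_rpow32 (hfnm n) (hfn0 n) (hfn32 n)
  -- integrability of the squared difference
  have hsqm : ∀ n, Measurable fun z => (Real.sqrt (fn n z) - Real.sqrt (f z)) ^ 2 := fun n =>
    ((hfnm n).sqrt.sub hfm.sqrt).pow_const 2
  have hsqint : ∀ n, Integrable (fun z => (Real.sqrt (fn n z) - Real.sqrt (f z)) ^ 2) μ := by
    intro n
    refine Integrable.mono' ((hfn1 n).add hf1) (hsqm n).aestronglyMeasurable ?_
    filter_upwards [hf0, hfn0 n] with z h1 h2
    rw [Real.norm_eq_abs, abs_of_nonneg (sq_nonneg _)]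
    simp only [Pi.add_apply]
    nlinarith [Real.sq_sqrt h1, Real.sq_sqrt h2, Real.sqrt_nonneg (f z),
      Real.sqrt_nonneg (fn n z), sq_nonneg (Real.sqrt (fn n z) - Real.sqrt (f z))]
  -- extraction of a rapidly converging subsequence
  obtain ⟨φ, hφmono, hφ⟩ :
      ∃ φ : ℕ → ℕ, StrictMono φ ∧ ∀ k,
        ∫ z, (Real.sqrt (fn (φ k) z) - Real.sqrt (f z)) ^ 2 ∂μ < (1/2 : ℝ) ^ k := by
    refine extraction_forall_of_eventually (P := fun k n =>
      ∫ z, (Real.sqrt (fn n z) - Real.sqrt (f z)) ^ 2 ∂μ < (1/2 : ℝ) ^ k) (fun k => ?_)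
    exact hL2.eventually_lt_const (by positivity)
  -- a.e. convergence of the subsequence
  have hae : ∀ᵐ z ∂μ, Tendsto (fun k => fn (φ k) z) atTop (nhds (f z)) := by
    have htsum : ∫⁻ z, ∑' k, ENNReal.ofReal ((Real.sqrt (fn (φ k) z) - Real.sqrt (f z)) ^ 2) ∂μ
        < ⊤ := by
      rw [lintegral_tsum (fun k => ((hsqm (φ k)).ennreal_ofReal).aemeasurable)]
      have heach : ∀ k, ∫⁻ z, ENNReal.ofReal ((Real.sqrt (fn (φ k) z) - Real.sqrt (f z)) ^ 2) ∂μ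
          = ENNReal.ofReal (∫ z, (Real.sqrt (fn (φ k) z) - Real.sqrt (f z)) ^ 2 ∂μ) := fun k =>
        (ofReal_integral_eq_lintegral_ofReal (hsqint (φ k))
          (Eventually.of_forall fun z => sq_nonneg _)).symm
      calc ∑' k, ∫⁻ z, ENNReal.ofReal ((Real.sqrt (fn (φ k) z) - Real.sqrt (f z)) ^ 2) ∂μ
          ≤ ∑' k, ENNReal.ofReal ((1/2 : ℝ) ^ k) := by
            refine ENNReal.tsum_le_tsum (fun k => ?_)
            rw [heach k]
            exact ENNReal.ofReal_le_ofReal (hφ k).le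
        _ = ENNReal.ofReal (∑' k, (1/2 : ℝ) ^ k) :=
            (ENNReal.ofReal_tsum_of_nonneg (fun k => by positivity)
              (summable_geometric_of_lt_one (by norm_num) (by norm_num))).symm
        _ < ⊤ := ENNReal.ofReal_lt_top
    have hfin_ae : ∀ᵐ z ∂μ,
        ∑' k, ENNReal.ofReal ((Real.sqrt (fn (φ k) z) - Real.sqrt (f z)) ^ 2) < ⊤ :=
      ae_lt_top' (Measurable.aemeasurable (by
        exact Measurable.ennreal_tsum (fun k => (hsqm (φ k)).ennreal_ofReal))) htsum.ne
    have hfn0' : ∀ᵐ z ∂μ, ∀ n, 0 ≤ fn n z := ae_all_iff.2 hfn0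
    filter_upwards [hfin_ae, hf0, hfn0'] with z hz h1 h2
    have h3 : Tendsto (fun k => (Real.sqrt (fn (φ k) z) - Real.sqrt (f z)) ^ 2) atTop (nhds 0) := by
      have ht0 := ENNReal.tendsto_atTop_zero_of_tsum_ne_top hz.ne
      have ht1 := (ENNReal.tendsto_toReal (by simp : (0:ENNReal) ≠ ⊤)).comp ht0
      simp only [ENNReal.toReal_zero] at ht1
      exact ht1.congr (fun k => ENNReal.toReal_ofReal (sq_nonneg _))
    have habs : Tendsto (fun k => |Real.sqrt (fn (φ k) z) - Real.sqrt (f z)|) atTop (nhds 0) := by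
      have := (Real.continuous_sqrt.tendsto 0).comp h3
      simp only [Function.comp_def, Real.sqrt_sq_eq_abs, Real.sqrt_zero] at this
      exact this
    have hd : Tendsto (fun k => Real.sqrt (fn (φ k) z) - Real.sqrt (f z)) atTop (nhds 0) := by
      exact tendsto_of_tendsto_of_tendsto_of_le_of_le (by simpa using habs.neg) habs
        (fun k => neg_abs_le _) (fun k => le_abs_self _)
    have h4 : Tendsto (fun k => Real.sqrt (fn (φ k) z)) atTop (nhds (Real.sqrt (f z))) := by
      have := hd.add (tendsto_const_nhds (x := Real.sqrt (f z)))
      simpa using this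
    have h5 := h4.pow 2
    rw [Real.sq_sqrt h1] at h5
    exact h5.congr (fun k => Real.sq_sqrt (h2 (φ k)))
  -- the entropy functions
  set G : ℕ → ℝ × Torus3 → ℝ := fun k z => fn (φ k) z * Real.log (fn (φ k) z) with hG
  set g : ℝ × Torus3 → ℝ := fun z => f z * Real.log (f z) with hg
  have hGm : ∀ k, Measurable (G k) := fun k =>
    (hfnm (φ k)).mul (Real.measurable_log.comp (hfnm (φ k)))
  have hgm : Measurable g := hfm.mul (Real.measurable_log.comp hfm)
  have hGint : ∀ k, Integrable (G k) μ := fun k =>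
    integrable_mul_log (hfnm (φ k)) (hfn0 (φ k)) (hfn32 (φ k))
  have hgint : Integrable g μ := integrable_mul_log hfm hf0 hf32
  -- uniform integrability
  have hui : UnifIntegrable G 1 μ := by
    intro ε hε
    set a : ℝ := ε / (2*(B+1)) with ha
    have ha0 : 0 < a := by positivity
    obtain ⟨C, hC0, hC⟩ := mul_log_le_aux ha0
    refine ⟨(ε/2) / (C+1), by positivity, fun k s hs hμs => ?_⟩
    rw [eLpNorm_one_eq_lintegral_enorm]
    have hbound : ∀ᵐ z ∂μ, (‖Set.indicator s (G k) z‖₊ : ENNReal)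
        ≤ Set.indicator s (fun z => ENNReal.ofReal C
            + ENNReal.ofReal (a * fn (φ k) z ^ ((3:ℝ)/2))) z := by
      filter_upwards [hfn0 (φ k)] with z hz
      by_cases hzs : z ∈ s
      · rw [Set.indicator_of_mem hzs, Set.indicator_of_mem hzs, ← enorm_eq_nnnorm, Real.enorm_eq_ofReal_abs]
        refine le_trans (ENNReal.ofReal_le_ofReal (hC _ hz)) ENNReal.ofReal_add_le
      · simp [Set.indicator_of_notMem hzs]
    calc ∫⁻ z, (‖Set.indicator s (G k) z‖₊ : ENNReal) ∂μ
        ≤ ∫⁻ z, Set.indicator s (fun z => ENNReal.ofReal C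
            + ENNReal.ofReal (a * fn (φ k) z ^ ((3:ℝ)/2))) z ∂μ := lintegral_mono_ae hbound
      _ = ∫⁻ z in s, (ENNReal.ofReal C
            + ENNReal.ofReal (a * fn (φ k) z ^ ((3:ℝ)/2))) ∂μ := lintegral_indicator hs _
      _ = ENNReal.ofReal C * μ s
            + ∫⁻ z in s, ENNReal.ofReal (a * fn (φ k) z ^ ((3:ℝ)/2)) ∂μ := by
          rw [lintegral_add_left measurable_const, setLIntegral_const]
      _ ≤ ENNReal.ofReal C * ENNReal.ofReal ((ε/2) / (C+1))
            + ∫⁻ z, ENNReal.ofReal (a * fn (φ k) z ^ ((3:ℝ)/2)) ∂μ := by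
          exact add_le_add (mul_le_mul_right hμs _) (setLIntegral_le_lintegral s _)
      _ ≤ ENNReal.ofReal (ε/2) + ENNReal.ofReal (ε/2) := by
          gcongr
          · rw [← ENNReal.ofReal_mul hC0]
            refine ENNReal.ofReal_le_ofReal ?_
            have h2 : C / (C+1) ≤ 1 :=
              div_le_one_of_le₀ (by linarith) (by linarith)
            calc C * (ε/2/(C+1)) = (C/(C+1)) * (ε/2) := by ring
              _ ≤ 1 * (ε/2) := mul_le_mul_of_nonneg_right h2 (by positivity)
              _ = ε/2 := one_mul _
          · rw [← ofReal_integral_eq_lintegral_ofReal (((hfn32 (φ k)).const_mul a))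
              (by filter_upwards [hfn0 (φ k)] with z hz; positivity)]
            refine ENNReal.ofReal_le_ofReal ?_
            rw [integral_const_mul]
            have h1 : a * ∫ z, fn (φ k) z ^ ((3:ℝ)/2) ∂μ ≤ a * B :=
              mul_le_mul_of_nonneg_left (hBle (φ k)) ha0.le
            refine le_trans h1 ?_
            rw [ha, div_mul_eq_mul_div]
            rw [div_le_iff₀ (by linarith : (0:ℝ) < 2*(B+1))]
            nlinarith
      _ = ENNReal.ofReal ε := by
          rw [← ENNReal.ofReal_add (by positivity) (by positivity)]
          norm_num
  -- a.e. convergence of entropies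
  have haeG : ∀ᵐ z ∂μ, Tendsto (fun k => G k z) atTop (nhds (g z)) := by
    filter_upwards [hae] with z hz
    exact (Real.continuous_mul_log.continuousAt).tendsto.comp hz
  -- Vitali convergence theorem
  have hvit : Tendsto (fun k => eLpNorm (G k - g) 1 μ) atTop (nhds 0) :=
    tendsto_Lp_finite_of_tendsto_ae le_rfl ENNReal.one_ne_top
      (fun k => (hGm k).aestronglyMeasurable) (memLp_one_iff_integrable.mpr hgint) hui haeG
  refine ⟨φ, hφmono, ?_⟩
  have heq : ∀ k, ∫ z, |fn (φ k) z * Real.log (fn (φ k) z) - f z * Real.log (f z)| ∂μ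
      = (eLpNorm (G k - g) 1 μ).toReal := by
    intro k
    have hint : Integrable (G k - g) μ := (hGint k).sub hgint
    rw [eLpNorm_one_eq_lintegral_enorm, ← ofReal_integral_norm_eq_lintegral_enorm hint,
      ENNReal.toReal_ofReal (integral_nonneg (fun z => norm_nonneg _))]
    simp only [Pi.sub_apply, Real.norm_eq_abs, hG, hg]
  simp only [heq]
  have := (ENNReal.tendsto_toReal (by simp : (0:ENNReal) ≠ ⊤)).comp hvit
  simpa [Function.comp_def] using this
end

section
/- Let (α, μ) be a measure space and let f, g : α → ℝ be measurable with f ≥ 0 and g ≥ 0 μ-a.e. Assume ∫ (√g − √f)² dμ < ∞, ∫ f^{3/2} dμ < ∞, and ∫ g^{3/2} dμ < ∞. Then the function √f · g^{1/4} · (√g − √f) is μ-integrable and |∫ √f · g^{1/4} · (√g − √f) dμ| ≤ (∫ (√g − √f)² dμ)^{1/2} · (∫ f^{3/2} dμ)^{1/3} · (∫ g^{3/2} dμ)^{1/6}. -/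
open MeasureTheory
open scoped ENNReal

lemma aux_memLp_of_integrable_rpow {α : Type*} [MeasurableSpace α] {μ : Measure α}
    {h : α → ℝ} (hm : AEStronglyMeasurable h μ) (h0 : 0 ≤ᵐ[μ] h) {p : ℝ} (hp : 0 < p)
    (hi : Integrable (fun x => h x ^ p) μ) : MemLp h (ENNReal.ofReal p) μ := by
  have hq0 : ENNReal.ofReal p ≠ 0 := by
    simp [ENNReal.ofReal_eq_zero, not_le, hp]
  have hqt : ENNReal.ofReal p ≠ ⊤ := ENNReal.ofReal_ne_top
  have key := memLp_norm_rpow_iff (p := ENNReal.ofReal p) (q := ENNReal.ofReal p) hm hq0 hqt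
  rw [ENNReal.div_self hq0 hqt] at key
  refine key.mp ?_
  rw [memLp_one_iff_integrable]
  refine hi.congr ?_
  filter_upwards [h0] with x hx
  rw [ENNReal.toReal_ofReal hp.le, Real.norm_of_nonneg hx]

/-- Hölder estimate (exponents 2, 3, 6) for the term `D_k¹`: if `f, g ≥ 0` a.e. with
`(√g − √f)² ∈ L¹`, `f^{3/2} ∈ L¹`, `g^{3/2} ∈ L¹`, then `√f · g^{1/4} · (√g − √f)`
is integrable and
`|∫ √f g^{1/4} (√g − √f)| ≤ (∫ (√g−√f)²)^{1/2} (∫ f^{3/2})^{1/3} (∫ g^{3/2})^{1/6}`. -/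
theorem holder_estimate_Dk1
    (α : Type*) [MeasurableSpace α] (μ : Measure α)
    (f g : α → ℝ) (hfm : Measurable f) (hgm : Measurable g)
    (hf0 : ∀ᵐ x ∂μ, 0 ≤ f x) (hg0 : ∀ᵐ x ∂μ, 0 ≤ g x)
    (h2 : Integrable (fun x => (Real.sqrt (g x) - Real.sqrt (f x)) ^ 2) μ)
    (hf32 : Integrable (fun x => f x ^ ((3 : ℝ) / 2)) μ)
    (hg32 : Integrable (fun x => g x ^ ((3 : ℝ) / 2)) μ) :
    Integrable (fun x =>
        Real.sqrt (f x) * g x ^ ((1 : ℝ) / 4) * (Real.sqrt (g x) - Real.sqrt (f x))) μ ∧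
      |∫ x, Real.sqrt (f x) * g x ^ ((1 : ℝ) / 4) *
          (Real.sqrt (g x) - Real.sqrt (f x)) ∂μ| ≤
        (∫ x, (Real.sqrt (g x) - Real.sqrt (f x)) ^ 2 ∂μ) ^ ((1 : ℝ) / 2) *
          (∫ x, f x ^ ((3 : ℝ) / 2) ∂μ) ^ ((1 : ℝ) / 3) *
          (∫ x, g x ^ ((3 : ℝ) / 2) ∂μ) ^ ((1 : ℝ) / 6) := by
  set u : α → ℝ := fun x => Real.sqrt (f x) * g x ^ ((1 : ℝ) / 4) with hu_def
  set v : α → ℝ := fun x => Real.sqrt (g x) - Real.sqrt (f x) with hv_def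
  set w : α → ℝ := fun x => g x ^ ((1 : ℝ) / 2) with hw_def
  have hum : Measurable u := by fun_prop
  have hvm : Measurable v := hgm.sqrt.sub hfm.sqrt
  have hwm : Measurable w := by fun_prop
  have hu0 : 0 ≤ᵐ[μ] u := hg0.mono fun x hx =>
    mul_nonneg (Real.sqrt_nonneg _) (Real.rpow_nonneg hx _)
  have hw0 : 0 ≤ᵐ[μ] w := hg0.mono fun x hx => Real.rpow_nonneg hx _
  -- MemLp facts
  have hMf : MemLp f (ENNReal.ofReal (3 / 2)) μ :=
    aux_memLp_of_integrable_rpow hfm.aestronglyMeasurable hf0 (by norm_num) hf32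
  have hw3 : (fun x => g x ^ ((3 : ℝ) / 2)) =ᵐ[μ] fun x => w x ^ (3 : ℝ) := by
    filter_upwards [hg0] with x hx
    simp only [hw_def]
    rw [← Real.rpow_mul hx]
    norm_num
  have hMw : MemLp w (ENNReal.ofReal 3) μ :=
    aux_memLp_of_integrable_rpow hwm.aestronglyMeasurable hw0 (by norm_num)
      (hg32.congr hw3)
  -- integrability of f * w
  have heq1 : (1 : ℝ≥0∞) / 1 = 1 / ENNReal.ofReal 3 + 1 / ENNReal.ofReal (3 / 2) := by
    rw [← ENNReal.ofReal_one,
      ← ENNReal.ofReal_div_of_pos (by norm_num : (0:ℝ) < 3),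
      ← ENNReal.ofReal_div_of_pos (by norm_num : (0:ℝ) < 3/2),
      ← ENNReal.ofReal_div_of_pos (by norm_num : (0:ℝ) < 1),
      ← ENNReal.ofReal_add (by norm_num) (by norm_num)]
    norm_num
  have hfw : Integrable (fun x => f x * w x) μ := by
    have h := (hMf.smul hMw (r := 1) (hpqr := ⟨by simpa only [one_div, inv_one] using heq1.symm⟩))
    rw [memLp_one_iff_integrable] at h
    exact h.congr (Filter.Eventually.of_forall fun x => mul_comm (w x) (f x))
  -- u² = f * w a.e.
  have huw : (fun x => f x * w x) =ᵐ[μ] fun x => u x ^ (2 : ℝ) := by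
    filter_upwards [hf0, hg0] with x hxf hxg
    simp only [hu_def, hw_def]
    rw [Real.mul_rpow (Real.sqrt_nonneg _) (Real.rpow_nonneg hxg _),
      Real.sqrt_eq_rpow, ← Real.rpow_mul hxf, ← Real.rpow_mul hxg]
    norm_num
  have hMu : MemLp u (ENNReal.ofReal 2) μ :=
    aux_memLp_of_integrable_rpow hum.aestronglyMeasurable hu0 (by norm_num)
      (hfw.congr huw)
  have hMv : MemLp v (ENNReal.ofReal 2) μ := by
    rw [show ENNReal.ofReal 2 = (2 : ℝ≥0∞) by norm_num [ENNReal.ofReal_ofNat]]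
    exact (memLp_two_iff_integrable_sq hvm.aestronglyMeasurable).mpr h2
  -- integrability of the product
  have heq2 : (1 : ℝ≥0∞) / 1 = 1 / ENNReal.ofReal 2 + 1 / ENNReal.ofReal 2 := by
    rw [← ENNReal.ofReal_one,
      ← ENNReal.ofReal_div_of_pos (by norm_num : (0:ℝ) < 2),
      ← ENNReal.ofReal_div_of_pos (by norm_num : (0:ℝ) < 1),
      ← ENNReal.ofReal_add (by norm_num) (by norm_num)]
    norm_num
  have hint : Integrable (fun x => u x * v x) μ := by
    have h := (hMv.smul hMu (r := 1) (hpqr := ⟨by simpa only [one_div, inv_one] using heq2.symm⟩))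
    rw [memLp_one_iff_integrable] at h
    exact h
  refine ⟨hint, ?_⟩
  -- nonnegativity of the integrals
  have hA : (0:ℝ) ≤ ∫ x, v x ^ 2 ∂μ := integral_nonneg fun x => sq_nonneg _
  have hB : (0:ℝ) ≤ ∫ x, f x ^ ((3:ℝ)/2) ∂μ :=
    integral_nonneg_of_ae (hf0.mono fun x hx => Real.rpow_nonneg hx _)
  have hC : (0:ℝ) ≤ ∫ x, g x ^ ((3:ℝ)/2) ∂μ :=
    integral_nonneg_of_ae (hg0.mono fun x hx => Real.rpow_nonneg hx _)
  have hfw0 : (0:ℝ) ≤ ∫ x, f x * w x ∂μ :=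
    integral_nonneg_of_ae ((hf0.and hw0).mono fun x hx => mul_nonneg hx.1 hx.2)
  -- Hölder with exponents 2, 2
  have hvabs : MemLp (fun x => |v x|) (ENNReal.ofReal 2) μ := by
    simpa [Real.norm_eq_abs] using hMv.norm
  have hH1 := integral_mul_le_Lp_mul_Lq_of_nonneg (μ := μ)
    ((Real.holderConjugate_iff (p := 2) (q := 2)).mpr ⟨by norm_num, by norm_num⟩)
    hu0 (Filter.Eventually.of_forall fun x => abs_nonneg (v x)) hMu hvabs
  -- Hölder with exponents 3/2, 3
  have hH2 := integral_mul_le_Lp_mul_Lq_of_nonneg (μ := μ)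
    ((Real.holderConjugate_iff (p := 3/2) (q := 3)).mpr ⟨by norm_num, by norm_num⟩)
    hf0 hw0 hMf hMw
  have e2 : ∫ x, |v x| ^ (2:ℝ) ∂μ = ∫ x, v x ^ 2 ∂μ := by
    refine integral_congr_ae (Filter.Eventually.of_forall fun x => ?_)
    show |v x| ^ (2:ℝ) = v x ^ 2
    rw [show (2:ℝ) = ((2:ℕ):ℝ) by norm_num, Real.rpow_natCast, sq_abs]
  have e1 : ∫ x, u x ^ (2:ℝ) ∂μ = ∫ x, f x * w x ∂μ := (integral_congr_ae huw).symm
  have e3 : ∫ x, w x ^ (3:ℝ) ∂μ = ∫ x, g x ^ ((3:ℝ)/2) ∂μ := (integral_congr_ae hw3).symm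
  rw [e3] at hH2
  have h23 : (1:ℝ)/(3/2) = 2/3 := by norm_num
  rw [h23] at hH2
  have step1 : |∫ x, u x * v x ∂μ| ≤ ∫ x, u x * |v x| ∂μ := by
    rw [← Real.norm_eq_abs]
    refine (norm_integral_le_integral_norm _).trans_eq ?_
    refine integral_congr_ae (hu0.mono fun x hx => ?_)
    show ‖u x * v x‖ = u x * |v x|
    rw [Real.norm_eq_abs, abs_mul, abs_of_nonneg hx]
  calc |∫ x, u x * v x ∂μ| ≤ ∫ x, u x * |v x| ∂μ := step1
    _ ≤ (∫ x, u x ^ (2:ℝ) ∂μ) ^ ((1:ℝ)/2) * (∫ x, |v x| ^ (2:ℝ) ∂μ) ^ ((1:ℝ)/2) := hH1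
    _ = (∫ x, f x * w x ∂μ) ^ ((1:ℝ)/2) * (∫ x, v x ^ 2 ∂μ) ^ ((1:ℝ)/2) := by rw [e1, e2]
    _ ≤ ((∫ x, f x ^ ((3:ℝ)/2) ∂μ) ^ ((2:ℝ)/3) * (∫ x, g x ^ ((3:ℝ)/2) ∂μ) ^ ((1:ℝ)/3))
          ^ ((1:ℝ)/2) * (∫ x, v x ^ 2 ∂μ) ^ ((1:ℝ)/2) := by
        exact mul_le_mul_of_nonneg_right
          (Real.rpow_le_rpow hfw0 hH2 (by norm_num)) (Real.rpow_nonneg hA _)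
    _ = (∫ x, v x ^ 2 ∂μ) ^ ((1:ℝ)/2) * (∫ x, f x ^ ((3:ℝ)/2) ∂μ) ^ ((1:ℝ)/3) *
          (∫ x, g x ^ ((3:ℝ)/2) ∂μ) ^ ((1:ℝ)/6) := by
        rw [Real.mul_rpow (Real.rpow_nonneg hB _) (Real.rpow_nonneg hC _),
          ← Real.rpow_mul hB, ← Real.rpow_mul hC]
        norm_num
        ring
end

section
/- Let (α, μ) be a measure space and let f, g : α → ℝ be measurable with f ≥ 0 and g ≥ 0 μ-a.e. Assume ∫ (√g − √f)² dμ < ∞ and ∫ f^{3/2} dμ < ∞. Then the function f · (g^{1/4} − f^{1/4}) is μ-integrable and |∫ f · (g^{1/4} − f^{1/4}) dμ| ≤ (∫ (√g − √f)² dμ)^{1/2} · (∫ f^{3/2} dμ)^{1/2}. -/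
open MeasureTheory

lemma ptwise_Dk2 {a b : ℝ} (ha : 0 ≤ a) (hb : 0 ≤ b) :
    |a * (b ^ ((1:ℝ)/4) - a ^ ((1:ℝ)/4))| ≤
      |Real.sqrt b - Real.sqrt a| * a ^ ((3:ℝ)/4) := by
  have ha34 : (0:ℝ) ≤ a ^ ((3:ℝ)/4) := Real.rpow_nonneg ha _
  have ha14 : (0:ℝ) ≤ a ^ ((1:ℝ)/4) := Real.rpow_nonneg ha _
  have hb14 : (0:ℝ) ≤ b ^ ((1:ℝ)/4) := Real.rpow_nonneg hb _
  have hsplit : a = a ^ ((3:ℝ)/4) * a ^ ((1:ℝ)/4) := by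
    rw [← Real.rpow_add_of_nonneg ha (by norm_num) (by norm_num)]
    norm_num
  calc |a * (b ^ ((1:ℝ)/4) - a ^ ((1:ℝ)/4))|
      = a ^ ((3:ℝ)/4) * (a ^ ((1:ℝ)/4) * |b ^ ((1:ℝ)/4) - a ^ ((1:ℝ)/4)|) := by
        rw [abs_mul, abs_of_nonneg ha, ← mul_assoc, ← hsplit]
    _ ≤ a ^ ((3:ℝ)/4) * |Real.sqrt b - Real.sqrt a| := by
        apply mul_le_mul_of_nonneg_left _ ha34
        have key : a ^ ((1:ℝ)/4) * |b ^ ((1:ℝ)/4) - a ^ ((1:ℝ)/4)| ≤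
            (b ^ ((1:ℝ)/4) + a ^ ((1:ℝ)/4)) * |b ^ ((1:ℝ)/4) - a ^ ((1:ℝ)/4)| := by
          apply mul_le_mul_of_nonneg_right _ (abs_nonneg _)
          linarith
        have heq : (b ^ ((1:ℝ)/4) + a ^ ((1:ℝ)/4)) * |b ^ ((1:ℝ)/4) - a ^ ((1:ℝ)/4)| =
            |Real.sqrt b - Real.sqrt a| := by
          rw [← abs_of_nonneg (show (0:ℝ) ≤ b ^ ((1:ℝ)/4) + a ^ ((1:ℝ)/4) by positivity),
            ← abs_mul]
          congr 1
          have hbs : Real.sqrt b = b ^ ((1:ℝ)/4) * b ^ ((1:ℝ)/4) := by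
            rw [Real.sqrt_eq_rpow, ← Real.rpow_add_of_nonneg hb (by norm_num) (by norm_num)]
            norm_num
          have has : Real.sqrt a = a ^ ((1:ℝ)/4) * a ^ ((1:ℝ)/4) := by
            rw [Real.sqrt_eq_rpow, ← Real.rpow_add_of_nonneg ha (by norm_num) (by norm_num)]
            norm_num
          rw [hbs, has]; ring
        linarith
    _ = |Real.sqrt b - Real.sqrt a| * a ^ ((3:ℝ)/4) := mul_comm _ _

lemma sq_rpow34 {a : ℝ} (ha : 0 ≤ a) : (a ^ ((3:ℝ)/4)) ^ 2 = a ^ ((3:ℝ)/2) := by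
  rw [sq, ← Real.rpow_add_of_nonneg ha (by norm_num) (by norm_num)]
  norm_num

/-- Estimate for the term `D_k²`: if `f, g ≥ 0` a.e. with `(√g − √f)² ∈ L¹` and
`f^{3/2} ∈ L¹`, then `f · (g^{1/4} − f^{1/4})` is integrable and
`|∫ f (g^{1/4} − f^{1/4})| ≤ (∫ (√g−√f)²)^{1/2} (∫ f^{3/2})^{1/2}`. -/
theorem holder_estimate_Dk2
    (α : Type*) [MeasurableSpace α] (μ : Measure α)
    (f g : α → ℝ) (hfm : Measurable f) (hgm : Measurable g)
    (hf0 : ∀ᵐ x ∂μ, 0 ≤ f x) (hg0 : ∀ᵐ x ∂μ, 0 ≤ g x)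
    (h2 : Integrable (fun x => (Real.sqrt (g x) - Real.sqrt (f x)) ^ 2) μ)
    (hf32 : Integrable (fun x => f x ^ ((3 : ℝ) / 2)) μ) :
    Integrable (fun x => f x * (g x ^ ((1 : ℝ) / 4) - f x ^ ((1 : ℝ) / 4))) μ ∧
      |∫ x, f x * (g x ^ ((1 : ℝ) / 4) - f x ^ ((1 : ℝ) / 4)) ∂μ| ≤
        (∫ x, (Real.sqrt (g x) - Real.sqrt (f x)) ^ 2 ∂μ) ^ ((1 : ℝ) / 2) *
          (∫ x, f x ^ ((3 : ℝ) / 2) ∂μ) ^ ((1 : ℝ) / 2) := by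
  set φ : α → ℝ := fun x => Real.sqrt (g x) - Real.sqrt (f x) with hφdef
  have hφm : Measurable φ := (hgm.sqrt).sub (hfm.sqrt)
  have habsm : Measurable fun x => |φ x| := hφm.abs
  have hf34m : Measurable fun x => f x ^ ((3:ℝ)/4) := by fun_prop
  -- Memℒp facts
  have hφmem : MemLp (fun x => |φ x|) 2 μ := by
    rw [memLp_two_iff_integrable_sq habsm.aestronglyMeasurable]
    simpa [sq_abs] using h2
  have hf34mem : MemLp (fun x => f x ^ ((3:ℝ)/4)) 2 μ := by
    rw [memLp_two_iff_integrable_sq hf34m.aestronglyMeasurable]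
    refine hf32.congr ?_
    filter_upwards [hf0] with x hx
    exact (sq_rpow34 hx).symm
  -- the bound is integrable
  have hB : Integrable (fun x => |φ x| * f x ^ ((3:ℝ)/4)) μ := by
    rw [← memLp_one_iff_integrable]
    have := hf34mem.smul (r := 1) hφmem
    simpa [smul_eq_mul, Pi.mul_def] using this
  -- target is measurable
  have htm : Measurable fun x => f x * (g x ^ ((1:ℝ)/4) - f x ^ ((1:ℝ)/4)) := by
    fun_prop
  -- pointwise bound a.e.
  have hbd : ∀ᵐ x ∂μ, ‖f x * (g x ^ ((1:ℝ)/4) - f x ^ ((1:ℝ)/4))‖ ≤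
      |φ x| * f x ^ ((3:ℝ)/4) := by
    filter_upwards [hf0, hg0] with x hfx hgx
    simpa only [Real.norm_eq_abs] using ptwise_Dk2 hfx hgx
  have hInt : Integrable (fun x => f x * (g x ^ ((1:ℝ)/4) - f x ^ ((1:ℝ)/4))) μ :=
    Integrable.mono' hB htm.aestronglyMeasurable hbd
  refine ⟨hInt, ?_⟩
  have h1 : |∫ x, f x * (g x ^ ((1:ℝ)/4) - f x ^ ((1:ℝ)/4)) ∂μ| ≤
      ∫ x, |φ x| * f x ^ ((3:ℝ)/4) ∂μ := by
    calc |∫ x, f x * (g x ^ ((1:ℝ)/4) - f x ^ ((1:ℝ)/4)) ∂μ|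
        ≤ ∫ x, ‖f x * (g x ^ ((1:ℝ)/4) - f x ^ ((1:ℝ)/4))‖ ∂μ := by
          rw [← Real.norm_eq_abs]; exact norm_integral_le_integral_norm _
      _ ≤ ∫ x, |φ x| * f x ^ ((3:ℝ)/4) ∂μ :=
          integral_mono_ae hInt.norm hB hbd
  have hpq : Real.HolderConjugate 2 2 := Real.HolderConjugate.two_two
  have h2' : ∫ x, |φ x| * f x ^ ((3:ℝ)/4) ∂μ ≤
      (∫ x, |φ x| ^ (2:ℝ) ∂μ) ^ ((1:ℝ)/2) *
        (∫ x, (f x ^ ((3:ℝ)/4)) ^ (2:ℝ) ∂μ) ^ ((1:ℝ)/2) := by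
    have := integral_mul_le_Lp_mul_Lq_of_nonneg hpq
      (f := fun x => |φ x|) (g := fun x => f x ^ ((3:ℝ)/4))
      (Filter.Eventually.of_forall fun x => abs_nonneg _)
      (by filter_upwards [hf0] with x hx; exact Real.rpow_nonneg hx _)
      (by rw [show ENNReal.ofReal (2:ℝ) = 2 by norm_num]; exact hφmem)
      (by rw [show ENNReal.ofReal (2:ℝ) = 2 by norm_num]; exact hf34mem)
    exact this
  have heq1 : ∫ x, |φ x| ^ (2:ℝ) ∂μ = ∫ x, φ x ^ 2 ∂μ := by
    refine integral_congr_ae (Filter.Eventually.of_forall fun x => ?_)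
    show |φ x| ^ (2:ℝ) = φ x ^ 2
    rw [Real.rpow_two, sq_abs]
  have heq2 : ∫ x, (f x ^ ((3:ℝ)/4)) ^ (2:ℝ) ∂μ = ∫ x, f x ^ ((3:ℝ)/2) ∂μ := by
    refine integral_congr_ae ?_
    filter_upwards [hf0] with x hx
    show (f x ^ ((3:ℝ)/4)) ^ (2:ℝ) = f x ^ ((3:ℝ)/2)
    rw [Real.rpow_two, sq_rpow34 hx]
  rw [heq1, heq2] at h2'
  exact h1.trans h2'
end
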